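/- Let b_1 < b_2 < ... < b_{2N-1} be real numbers and for a < b_1 define g(a) = ∏_{i odd, i>1} (1+√((b_1−a)/(b_i−a)))/(1−√((b_1−a)/(b_i−a))) · ∏_{i even} (1−√((b_1−a)/(b_i−a)))/(1+√((b_1−a)/(b_i−a))). Then lim_{a→−∞} g(a) = ∏_{j=1}^{N−1} (b_{2j}−b_1)/(b_{2j+1}−b_1). -/

import Mathlib

open Filter

lemma tendsto_ratio (c d : ℝ) :
    Tendsto (fun a : ℝ => (c - a) / (d - a)) atBot (nhds 1) := by
  have hd : Tendsto (fun a : ℝ => d - a) atBot atTop := by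
    have : Tendsto (fun a : ℝ => -a) atBot atTop := tendsto_neg_atBot_atTop
    simpa [sub_eq_add_neg] using tendsto_atTop_add_const_left atBot d this
  have h0 : Tendsto (fun a : ℝ => (c - d) / (d - a)) atBot (nhds 0) :=
    Tendsto.div_atTop tendsto_const_nhds hd
  have h1 : Tendsto (fun a : ℝ => (c - d) / (d - a) + 1) atBot (nhds 1) := by
    simpa using h0.add tendsto_const_nhds
  refine h1.congr' ?_
  filter_upwards [eventually_lt_atBot d] with a ha
  have hda : d - a ≠ 0 := by linarith [ha]
  field_simp
  ring

lemma tendsto_sqrt_ratio (x c : ℝ) :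
    Tendsto (fun a : ℝ => Real.sqrt ((x - a) / (c - a))) atBot (nhds 1) := by
  have := (Real.continuous_sqrt.tendsto 1).comp (tendsto_ratio x c)
  simpa [Function.comp_def] using this

lemma per_pair (x c0 c1 : ℝ) (h0 : x < c0) (h01 : c0 < c1) :
    Tendsto (fun a : ℝ =>
      (1 + Real.sqrt ((x - a) / (c1 - a))) / (1 - Real.sqrt ((x - a) / (c1 - a))) *
        ((1 - Real.sqrt ((x - a) / (c0 - a))) / (1 + Real.sqrt ((x - a) / (c0 - a)))))
      atBot (nhds ((c0 - x) / (c1 - x))) := by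
  set K := (c0 - x) / (c1 - x) with hK
  have hH : Tendsto (fun a : ℝ =>
      K * ((1 + Real.sqrt ((x - a) / (c1 - a))) ^ 2 / (1 + Real.sqrt ((x - a) / (c0 - a))) ^ 2)
        * ((c1 - a) / (c0 - a))) atBot (nhds K) := by
    have hr1 := tendsto_sqrt_ratio x c1
    have hr0 := tendsto_sqrt_ratio x c0
    have h1 : Tendsto (fun a : ℝ => (1 + Real.sqrt ((x - a) / (c1 - a))) ^ 2) atBot
        (nhds ((1 + 1 : ℝ) ^ 2)) := (tendsto_const_nhds.add hr1).pow 2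
    have h0' : Tendsto (fun a : ℝ => (1 + Real.sqrt ((x - a) / (c0 - a))) ^ 2) atBot
        (nhds ((1 + 1 : ℝ) ^ 2)) := (tendsto_const_nhds.add hr0).pow 2
    have hdiv : Tendsto (fun a : ℝ =>
        (1 + Real.sqrt ((x - a) / (c1 - a))) ^ 2 / (1 + Real.sqrt ((x - a) / (c0 - a))) ^ 2)
        atBot (nhds 1) := by
      have := h1.div h0' (by norm_num)
      simpa [Pi.div_def] using this
    have := ((tendsto_const_nhds (x := K)).mul hdiv).mul (tendsto_ratio c1 c0)
    simpa using this
  refine hH.congr' ?_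
  filter_upwards [eventually_lt_atBot x] with a ha
  have hxa : 0 < x - a := by linarith
  have hc0a : 0 < c0 - a := by linarith
  have hc1a : 0 < c1 - a := by linarith
  set s0 := Real.sqrt ((x - a) / (c0 - a)) with hs0
  set s1 := Real.sqrt ((x - a) / (c1 - a)) with hs1
  have hs0sq : s0 ^ 2 = (x - a) / (c0 - a) := Real.sq_sqrt (by positivity)
  have hs1sq : s1 ^ 2 = (x - a) / (c1 - a) := Real.sq_sqrt (by positivity)
  have hs0nn : 0 ≤ s0 := Real.sqrt_nonneg _
  have hs1nn : 0 ≤ s1 := Real.sqrt_nonneg _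
  have hs0lt : s0 < 1 := by
    rw [hs0, show (1:ℝ) = Real.sqrt 1 by simp]
    exact Real.sqrt_lt_sqrt (by positivity) (by rw [div_lt_one hc0a]; linarith)
  have hs1lt : s1 < 1 := by
    rw [hs1, show (1:ℝ) = Real.sqrt 1 by simp]
    exact Real.sqrt_lt_sqrt (by positivity) (by rw [div_lt_one hc1a]; linarith)
  have e0 : (1 - s0) * (1 + s0) * (c0 - a) = c0 - x := by
    have : (1 - s0) * (1 + s0) = 1 - s0 ^ 2 := by ring
    rw [this, hs0sq]
    field_simp
    ring
  have e1 : (1 - s1) * (1 + s1) * (c1 - a) = c1 - x := by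
    have : (1 - s1) * (1 + s1) = 1 - s1 ^ 2 := by ring
    rw [this, hs1sq]
    field_simp
    ring
  have h1s0 : (1 : ℝ) + s0 ≠ 0 := by linarith
  have h1s1 : (1 : ℝ) + s1 ≠ 0 := by linarith
  have h1ms0 : (1 : ℝ) - s0 ≠ 0 := by linarith
  have h1ms1 : (1 : ℝ) - s1 ≠ 0 := by linarith
  have hc0a' : c0 - a ≠ 0 := ne_of_gt hc0a
  have hc1a' : c1 - a ≠ 0 := ne_of_gt hc1a
  rw [hK, ← e0, ← e1]
  field_simp

theorem limit_g_atBot (N : ℕ) (hN : 1 ≤ N) (b : ℕ → ℝ)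
    (hmono : ∀ i j, 1 ≤ i → i < j → j ≤ 2 * N - 1 → b i < b j) :
    Tendsto (fun a : ℝ =>
        (∏ i ∈ (Finset.Icc 2 (2 * N - 1)).filter (fun i => Odd i),
          (1 + Real.sqrt ((b 1 - a) / (b i - a))) / (1 - Real.sqrt ((b 1 - a) / (b i - a)))) *
        (∏ i ∈ (Finset.Icc 2 (2 * N - 1)).filter (fun i => Even i),
          (1 - Real.sqrt ((b 1 - a) / (b i - a))) / (1 + Real.sqrt ((b 1 - a) / (b i - a)))))
      atBot (nhds (∏ j ∈ Finset.Icc 1 (N - 1), (b (2 * j) - b 1) / (b (2 * j + 1) - b 1))) := by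
  have hodd : (Finset.Icc 2 (2 * N - 1)).filter (fun i => Odd i)
      = (Finset.Icc 1 (N - 1)).image (fun j => 2 * j + 1) := by
    ext i
    simp only [Finset.mem_filter, Finset.mem_Icc, Finset.mem_image, Nat.odd_iff]
    constructor
    · rintro ⟨⟨h2, hle⟩, hodd⟩
      exact ⟨i / 2, by omega, by omega⟩
    · rintro ⟨j, ⟨hj1, hj2⟩, rfl⟩
      omega
  have heven : (Finset.Icc 2 (2 * N - 1)).filter (fun i => Even i)
      = (Finset.Icc 1 (N - 1)).image (fun j => 2 * j) := by
    ext i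
    simp only [Finset.mem_filter, Finset.mem_Icc, Finset.mem_image, Nat.even_iff]
    constructor
    · rintro ⟨⟨h2, hle⟩, heven⟩
      exact ⟨i / 2, by omega, by omega⟩
    · rintro ⟨j, ⟨hj1, hj2⟩, rfl⟩
      omega
  have hinj1 : ∀ x ∈ Finset.Icc 1 (N - 1), ∀ y ∈ Finset.Icc 1 (N - 1),
      2 * x + 1 = 2 * y + 1 → x = y := by intro x _ y _ h; omega
  have hinj2 : ∀ x ∈ Finset.Icc 1 (N - 1), ∀ y ∈ Finset.Icc 1 (N - 1),
      2 * x = 2 * y → x = y := by intro x _ y _ h; omega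
  have hfun : (fun a : ℝ =>
        (∏ i ∈ (Finset.Icc 2 (2 * N - 1)).filter (fun i => Odd i),
          (1 + Real.sqrt ((b 1 - a) / (b i - a))) / (1 - Real.sqrt ((b 1 - a) / (b i - a)))) *
        (∏ i ∈ (Finset.Icc 2 (2 * N - 1)).filter (fun i => Even i),
          (1 - Real.sqrt ((b 1 - a) / (b i - a))) / (1 + Real.sqrt ((b 1 - a) / (b i - a)))))
      = (fun a : ℝ => ∏ j ∈ Finset.Icc 1 (N - 1),
          ((1 + Real.sqrt ((b 1 - a) / (b (2 * j + 1) - a))) /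
            (1 - Real.sqrt ((b 1 - a) / (b (2 * j + 1) - a))) *
          ((1 - Real.sqrt ((b 1 - a) / (b (2 * j) - a))) /
            (1 + Real.sqrt ((b 1 - a) / (b (2 * j) - a)))))) := by
    funext a
    rw [hodd, heven, Finset.prod_image hinj1, Finset.prod_image hinj2,
      ← Finset.prod_mul_distrib]
  rw [hfun]
  apply tendsto_finset_prod
  intro j hj
  simp only [Finset.mem_Icc] at hj
  obtain ⟨hj1, hj2⟩ := hj
  have hb0 : b 1 < b (2 * j) := hmono 1 (2 * j) le_rfl (by omega) (by omega)
  have hb1 : b (2 * j) < b (2 * j + 1) := hmono (2 * j) (2 * j + 1) (by omega) (by omega) (by omega)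
  exact per_pair (b 1) (b (2 * j)) (b (2 * j + 1)) hb0 hb1
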